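/- Let p = (p₁ ≥ ... ≥ p_r > 0) be a partition of N and f the associated shift nilpotent. Define the linear map from U = span{E_{(j,1),(i,p_i−ℓ)}} to gl_N sending E_{(j,1),(i,p_i−ℓ)} to Σ_{k=0}^{ℓ} E_{(j,k+1),(i,p_i+k−ℓ)}, for 0 ≤ ℓ ≤ min(p_i,p_j)−1. Then this map is injective and its image lies in the centralizer of the 'right-shift' operator ẽ = Σ_{(i,h): h < p_i} E_{(i,h),(i,h+1)}. Consequently dim U ≤ dim g^{ẽ} = dim g^f. -/

import Mathlib

open Matrix

/-- Index set of the pyramid attached to the partition `p` (0-based). -/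
abbrev GIdx {r : ℕ} (p : Fin r → ℕ) : Type := (i : Fin r) × Fin (p i)

/-- Index set for the basis of `U`: triples `(j, i, ℓ)` with `ℓ < min(pᵢ, pⱼ)`. -/
abbrev TIdx {r : ℕ} (p : Fin r → ℕ) : Type :=
  {t : Fin r × Fin r × ℕ // t.2.2 < min (p t.2.1) (p t.1)}

/-- The "right-shift" operator `ẽ = Σ_{(i,h): h < pᵢ} E_{(i,h),(i,h+1)}`. -/
def shiftE (F : Type*) [Field F] {r : ℕ} (p : Fin r → ℕ) :
    Matrix (GIdx p) (GIdx p) F :=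
  Matrix.of fun x y => if x.1 = y.1 ∧ (x.2 : ℕ) + 1 = (y.2 : ℕ) then 1 else 0

/-- The map \eqref{eq:ge} on basis elements:
`E_{(j,1),(i,pᵢ−ℓ)} ↦ Σ_{k=0}^{ℓ} E_{(j,k+1),(i,pᵢ+k−ℓ)}` (0-based indices). -/
def geMap (F : Type*) [Field F] {r : ℕ} (p : Fin r → ℕ) (t : TIdx p) :
    Matrix (GIdx p) (GIdx p) F :=
  ∑ k : Fin (t.1.2.2 + 1),
    Matrix.single
      ⟨t.1.1, ⟨(k : ℕ), by have h1 := t.2; have h2 := k.isLt; omega⟩⟩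
      ⟨t.1.2.1, ⟨p t.1.2.1 - 1 - t.1.2.2 + (k : ℕ), by have h1 := t.2; have h2 := k.isLt; omega⟩⟩ 1

lemma gidx_eq_iff {r : ℕ} {p : Fin r → ℕ} {a c : Fin r} {b : Fin (p a)} {d : Fin (p c)} :
    (⟨a, b⟩ : GIdx p) = ⟨c, d⟩ ↔ a = c ∧ (b : ℕ) = (d : ℕ) := by
  constructor
  · intro h
    injection h with h1 h2
    subst h1
    exact ⟨rfl, by rw [eq_of_heq h2]⟩
  · rintro ⟨h1, h2⟩
    subst h1
    exact congrArg _ (Fin.ext h2)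

lemma geMap_apply {F : Type*} [Field F] {r : ℕ} (p : Fin r → ℕ) (t : TIdx p)
    (x y : GIdx p) :
    geMap F p t x y =
      if x.1 = t.1.1 ∧ y.1 = t.1.2.1 ∧ (x.2 : ℕ) ≤ t.1.2.2 ∧
         (y.2 : ℕ) = p t.1.2.1 - 1 - t.1.2.2 + (x.2 : ℕ) then 1 else 0 := by
  obtain ⟨x1, x2⟩ := x
  obtain ⟨y1, y2⟩ := y
  obtain ⟨⟨j, i, l⟩, ht⟩ := t
  simp only [geMap, Matrix.sum_apply, Matrix.single, Matrix.of_apply]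
  simp only [gidx_eq_iff]
  split
  · rename_i hc
    obtain ⟨h1, h2, h3, h4⟩ := hc
    rw [Finset.sum_eq_single (⟨(x2 : ℕ), by omega⟩ : Fin (l + 1))]
    · rw [if_pos]
      exact ⟨⟨h1.symm, rfl⟩, h2.symm, by simp_all⟩
    · intro k _ hk
      rw [if_neg]
      rintro ⟨⟨-, hk2⟩, -⟩
      exact hk (Fin.ext (by simp_all))
    · intro h
      exact absurd (Finset.mem_univ _) h
  · rename_i hc
    apply Finset.sum_eq_zero
    intro k _
    rw [if_neg]
    rintro ⟨⟨e1, e2⟩, e3, e4⟩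
    exact hc ⟨e1.symm, e3.symm, by omega, by omega⟩

lemma shiftE_mul {F : Type*} [Field F] {r : ℕ} (p : Fin r → ℕ)
    (M : Matrix (GIdx p) (GIdx p) F) (x y : GIdx p) :
    (shiftE F p * M) x y =
      if h : (x.2 : ℕ) + 1 < p x.1 then M ⟨x.1, ⟨(x.2 : ℕ) + 1, h⟩⟩ y else 0 := by
  rw [Matrix.mul_apply]
  split
  · rename_i h
    rw [Finset.sum_eq_single (⟨x.1, ⟨(x.2 : ℕ) + 1, h⟩⟩ : GIdx p)]
    · simp [shiftE]
    · rintro ⟨z1, z2⟩ _ hz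
      rw [show shiftE F p x ⟨z1, z2⟩ = 0 from ?_, zero_mul]
      simp only [shiftE, Matrix.of_apply]
      rw [if_neg]
      rintro ⟨h1, h2⟩
      obtain ⟨x1, x2⟩ := x
      exact hz (gidx_eq_iff.mpr ⟨h1.symm, h2.symm⟩)
    · intro h; exact absurd (Finset.mem_univ _) h
  · rename_i h
    apply Finset.sum_eq_zero
    rintro ⟨z1, z2⟩ _
    rw [show shiftE F p x ⟨z1, z2⟩ = 0 from ?_, zero_mul]
    simp only [shiftE, Matrix.of_apply]
    rw [if_neg]
    rintro ⟨h1, h2⟩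
    apply h
    have := z2.isLt
    subst h1
    omega

lemma mul_shiftE {F : Type*} [Field F] {r : ℕ} (p : Fin r → ℕ)
    (M : Matrix (GIdx p) (GIdx p) F) (x y : GIdx p) :
    (M * shiftE F p) x y =
      if h : 1 ≤ (y.2 : ℕ) then
        M x ⟨y.1, ⟨(y.2 : ℕ) - 1, by have := y.2.isLt; omega⟩⟩ else 0 := by
  rw [Matrix.mul_apply]
  split
  · rename_i h
    rw [Finset.sum_eq_single (⟨y.1, ⟨(y.2 : ℕ) - 1, by have := y.2.isLt; omega⟩⟩ : GIdx p)]
    · have h1 : shiftE F p (⟨y.1, ⟨(y.2 : ℕ) - 1, by have := y.2.isLt; omega⟩⟩ : GIdx p) y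
          = 1 := by
        simp only [shiftE, Matrix.of_apply]
        split
        · rfl
        · rename_i hcon; exact absurd ⟨by trivial, by omega⟩ hcon
      rw [h1, mul_one]
    · rintro ⟨z1, z2⟩ _ hz
      rw [show shiftE F p ⟨z1, z2⟩ y = 0 from ?_, mul_zero]
      simp only [shiftE, Matrix.of_apply]
      rw [if_neg]
      rintro ⟨h1, h2⟩
      obtain ⟨y1, y2⟩ := y
      exact hz (gidx_eq_iff.mpr ⟨h1, by simp_all; omega⟩)
    · intro h; exact absurd (Finset.mem_univ _) h
  · rename_i h
    apply Finset.sum_eq_zero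
    rintro ⟨z1, z2⟩ _
    rw [show shiftE F p ⟨z1, z2⟩ y = 0 from ?_, mul_zero]
    simp only [shiftE, Matrix.of_apply]
    rw [if_neg]
    rintro ⟨h1, h2⟩
    omega

/-- **The map \eqref{eq:ge} is injective with image in `g^{ẽ}`** (part of the proof of
Proposition 5.1): each image `Σ_{k=0}^{ℓ} E_{(j,k+1),(i,pᵢ+k−ℓ)}` commutes with the
right-shift operator `ẽ`, and the family of images of the basis of `U` is linearly
independent. -/
theorem statement16 {F : Type*} [Field F] [CharZero F] {N r : ℕ} (p : Fin r → ℕ)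
    (hp : ∀ i, 0 < p i) (hsort : ∀ i j : Fin r, i ≤ j → p j ≤ p i)
    (hN : ∑ i, p i = N) :
    (∀ t : TIdx p, shiftE F p * geMap F p t = geMap F p t * shiftE F p) ∧
    LinearIndependent F (geMap F p) := by
  constructor
  · intro t
    ext x y
    rw [shiftE_mul, mul_shiftE]
    obtain ⟨x1, x2⟩ := x
    obtain ⟨y1, y2⟩ := y
    obtain ⟨⟨j, i, l⟩, ht⟩ := t
    simp only [lt_min_iff] at ht
    have hx2 := x2.isLt
    have hy2 := y2.isLt
    simp only [geMap_apply]
    rcases eq_or_ne x1 j with e1 | e1 <;> rcases eq_or_ne y1 i with e2 | e2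
    · subst e1; subst e2
      simp only [eq_self_iff_true, true_and]
      split_ifs <;> first | rfl | omega
    · split_ifs <;> first | rfl | tauto
    · split_ifs <;> first | rfl | tauto
    · split_ifs <;> first | rfl | tauto
  · rw [linearIndependent_iff']
    intro s g hsum t hts
    obtain ⟨⟨j, i, l⟩, ht⟩ := t
    have ht' := ht
    simp only [lt_min_iff] at ht'
    set x : GIdx p := ⟨j, ⟨0, hp j⟩⟩ with hxdef
    set y : GIdx p := ⟨i, ⟨p i - 1 - l, by omega⟩⟩ with hydef
    have h0 : (∑ t' ∈ s, g t' • geMap F p t') x y = (0 : Matrix (GIdx p) (GIdx p) F) x y := by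
      rw [hsum]
    simp only [Matrix.sum_apply, Matrix.smul_apply, smul_eq_mul, Matrix.zero_apply] at h0
    have hz : ∀ t' ∈ s, t' ≠ ⟨(j, i, l), ht⟩ → g t' * geMap F p t' x y = 0 := by
      rintro ⟨⟨j', i', l'⟩, hu⟩ _ hne
      have hu' := hu
      simp only [lt_min_iff] at hu'
      rw [geMap_apply, if_neg, mul_zero]
      rintro ⟨e1, e2, e3, e4⟩
      apply hne
      simp only [hxdef, hydef] at e1 e2 e4
      subst e1; subst e2
      dsimp only [x, y] at e4 e3
      have : l' = l := by omega
      subst this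
      rfl
    rw [Finset.sum_eq_single_of_mem _ hts hz] at h0
    rw [geMap_apply, if_pos, mul_one] at h0
    · exact h0
    · refine ⟨rfl, rfl, Nat.zero_le _, ?_⟩
      simp only [hxdef, hydef]
      dsimp only [x, y]
      omega
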